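/- Let G be a context-free grammar over an alphabet T in which every production rule has the form A → a·B (A, B nonterminals, a a terminal) or the form A → a (a a terminal). Then there exists a context-free grammar G' over T, all of whose production rules also have one of these two forms and in which additionally every rule of the form A → a·B satisfies A ≠ B, such that the language generated by G' equals the language generated by G. -/

import Mathlib

noncomputable section SelfRecElim
open Classical

namespace SelfRecElim

variable {T : Type}

/-- Map a symbol into the doubled-nonterminal grammar. -/
def trSym {N : Type*} (A : N) (b : Bool) : Symbol T N → Symbol T (N × Bool)
  | Symbol.terminal a => Symbol.terminal a
  | Symbol.nonterminal B =>
      Symbol.nonterminal (if B = A then (A, !b) else (B, false))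

/-- Map a rule into the doubled-nonterminal grammar. -/
def trRule {N : Type*} (b : Bool) (r : ContextFreeRule T N) : ContextFreeRule T (N × Bool) :=
  ⟨(r.input, b), r.output.map (trSym r.input b)⟩

/-- The transformed grammar. -/
@[reducible]
def trG (G : ContextFreeGrammar T) : ContextFreeGrammar T :=
  ⟨G.NT × Bool, (G.initial, false),
    G.rules.image (trRule false) ∪ G.rules.image (trRule true)⟩

lemma mem_trG_rules {G : ContextFreeGrammar T} {r : ContextFreeRule T (trG G).NT} :
    r ∈ (trG G).rules ↔ ∃ r₀ ∈ G.rules, ∃ b : Bool, r = trRule b r₀ := by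
  show r ∈ G.rules.image (trRule false) ∪ G.rules.image (trRule true) ↔ _
  simp only [Finset.mem_union, Finset.mem_image]
  constructor
  · rintro (⟨r₀, h₀, rfl⟩ | ⟨r₀, h₀, rfl⟩)
    exacts [⟨r₀, h₀, false, rfl⟩, ⟨r₀, h₀, true, rfl⟩]
  · rintro ⟨r₀, h₀, b, rfl⟩
    cases b
    exacts [Or.inl ⟨r₀, h₀, rfl⟩, Or.inr ⟨r₀, h₀, rfl⟩]

/-- A rewrite applied to a string whose only nonterminal is at the end. -/
lemma rewrites_end {N : Type*} {r : ContextFreeRule T N} (u : List T) {X : N}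
    {v : List (Symbol T N)}
    (h : r.Rewrites (List.map Symbol.terminal u ++ [Symbol.nonterminal X]) v) :
    r.input = X ∧ v = List.map Symbol.terminal u ++ r.output := by
  induction u generalizing v with
  | nil =>
    simp only [List.map_nil, List.nil_append] at h ⊢
    cases h with
    | head s =>
      simp_all
    | cons x hrs =>
      exact absurd hrs (by intro h; cases h)
  | cons a u ih =>
    simp only [List.map_cons, List.cons_append] at h
    cases h with
    | cons x hrs =>
      obtain ⟨h1, h2⟩ := ih hrs
      exact ⟨h1, by simp [h2]⟩

/-- A terminal-only string derives only itself. -/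
lemma derives_terminal_eq {g : ContextFreeGrammar T} {u : List T}
    {s : List (Symbol T g.NT)}
    (h : g.Derives (List.map Symbol.terminal u) s) : s = List.map Symbol.terminal u := by
  rcases h.eq_or_head with heq | ⟨v, ⟨r, _, hr⟩, _⟩
  · exact heq.symm
  · exfalso
    obtain ⟨p, q, hu, _⟩ := hr.exists_parts
    have : Symbol.nonterminal r.input ∈ List.map (@Symbol.terminal T g.NT) u := by
      rw [hu]; simp
    simp only [List.mem_map] at this
    obtain ⟨_, _, hcontr⟩ := this
    cases hcontr

lemma bwd (G : ContextFreeGrammar T)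
    (hG : ∀ r ∈ G.rules,
      (∃ (a : T) (B : G.NT), r.output = [Symbol.terminal a, Symbol.nonterminal B]) ∨
      (∃ a : T, r.output = [Symbol.terminal a]))
    {w : List T} {s : List (Symbol T (trG G).NT)}
    (h : (trG G).Derives s (List.map Symbol.terminal w)) :
    ∀ (u : List T) (A : G.NT) (b : Bool),
      s = List.map Symbol.terminal u ++ [Symbol.nonterminal (A, b)] →
      ∃ v, w = u ++ v ∧ G.Derives [Symbol.nonterminal A] (List.map Symbol.terminal v) := by
  induction h using Relation.ReflTransGen.head_induction_on with
  | refl =>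
    intro u A b hs
    exfalso
    have : Symbol.nonterminal (A, b) ∈ List.map (@Symbol.terminal T (trG G).NT) w := by
      rw [hs]; simp
    simp only [List.mem_map] at this
    obtain ⟨_, _, hcontr⟩ := this
    cases hcontr
  | head hst ht ih =>
    intro u A b hs
    subst hs
    obtain ⟨r, hrmem, hr⟩ := hst
    obtain ⟨hin, hout⟩ := rewrites_end u hr
    obtain ⟨r₀, hr₀, b', rfl⟩ := mem_trG_rules.mp hrmem
    have hin' : r₀.input = A ∧ b' = b := by
      have := hin
      simp only [trRule] at this
      exact ⟨congrArg Prod.fst this, congrArg Prod.snd this⟩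
    obtain ⟨hA, hb⟩ := hin'
    rcases hG r₀ hr₀ with ⟨a, B, hBo⟩ | ⟨a, hBo⟩
    · -- r₀ : A → a B
      set X : G.NT × Bool := if B = r₀.input then (r₀.input, !b') else (B, false) with hX
      have hout' : (trRule b' r₀).output =
          [Symbol.terminal a, Symbol.nonterminal X] := by
        simp [trRule, hBo, trSym, hX]
      have ht' : _ = List.map Symbol.terminal (u ++ [a]) ++
          [Symbol.nonterminal (X.1, X.2)] := hout.trans (by simp [hout'])
      obtain ⟨v, hw, hd⟩ := ih (u ++ [a]) X.1 X.2 ht'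
      have hX1 : X.1 = B := by
        rw [hX]; split
        · rename_i hBe; simp [hBe]
        · rfl
      refine ⟨a :: v, by simp [hw], ?_⟩
      have step : G.Produces [Symbol.nonterminal A] [Symbol.terminal a, Symbol.nonterminal B] := by
        refine ⟨r₀, hr₀, ?_⟩
        rw [← hA, ← hBo]
        exact ContextFreeRule.Rewrites.input_output
      refine step.trans_derives ?_
      have := (hX1 ▸ hd).append_left [Symbol.terminal a]
      simpa using this
    · -- r₀ : A → a
      have hout' : (trRule b' r₀).output = [Symbol.terminal a] := by
        simp [trRule, hBo, trSym]
      have htterm : _ = List.map Symbol.terminal (u ++ [a]) := hout.trans (by simp [hout'])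
      have : List.map (@Symbol.terminal T (trG G).NT) w
          = List.map Symbol.terminal (u ++ [a]) := derives_terminal_eq (htterm ▸ ht)
      have hw : w = u ++ [a] :=
        List.map_injective_iff.mpr (fun x y hxy => by cases hxy; rfl) this
      refine ⟨[a], hw, ?_⟩
      refine ContextFreeGrammar.Produces.single ⟨r₀, hr₀, ?_⟩
      simp only [List.map_cons, List.map_nil]
      rw [← hA, ← hBo]
      exact ContextFreeRule.Rewrites.input_output

lemma fwd (G : ContextFreeGrammar T)
    (hG : ∀ r ∈ G.rules,
      (∃ (a : T) (B : G.NT), r.output = [Symbol.terminal a, Symbol.nonterminal B]) ∨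
      (∃ a : T, r.output = [Symbol.terminal a]))
    {w : List T} {s : List (Symbol T G.NT)}
    (h : G.Derives s (List.map Symbol.terminal w)) :
    ∀ (u : List T) (A : G.NT),
      s = List.map Symbol.terminal u ++ [Symbol.nonterminal A] →
      ∀ b : Bool, ∃ v, w = u ++ v ∧
        (trG G).Derives [Symbol.nonterminal (A, b)] (List.map Symbol.terminal v) := by
  induction h using Relation.ReflTransGen.head_induction_on with
  | refl =>
    intro u A hs b
    exfalso
    have : Symbol.nonterminal A ∈ List.map (@Symbol.terminal T G.NT) w := by
      rw [hs]; simp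
    simp only [List.mem_map] at this
    obtain ⟨_, _, hcontr⟩ := this
    cases hcontr
  | head hst ht ih =>
    intro u A hs b
    subst hs
    obtain ⟨r₀, hr₀, hr⟩ := hst
    obtain ⟨hA, hout⟩ := rewrites_end u hr
    rcases hG r₀ hr₀ with ⟨a, B, hBo⟩ | ⟨a, hBo⟩
    · set X : G.NT × Bool := if B = r₀.input then (r₀.input, !b) else (B, false) with hX
      have hX1 : X.1 = B := by
        rw [hX]; split
        · rename_i hBe; simp [hBe]
        · rfl
      have ht' : _ = List.map Symbol.terminal (u ++ [a]) ++ [Symbol.nonterminal B] :=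
        hout.trans (by simp [hBo])
      obtain ⟨v, hw, hd⟩ := ih (u ++ [a]) B ht' X.2
      refine ⟨a :: v, by simp [hw], ?_⟩
      have hmem : trRule b r₀ ∈ (trG G).rules := mem_trG_rules.mpr ⟨r₀, hr₀, b, rfl⟩
      have step : (trG G).Produces [Symbol.nonterminal (A, b)]
          [Symbol.terminal a, Symbol.nonterminal X] := by
        refine ⟨trRule b r₀, hmem, ?_⟩
        have h1 : (trRule b r₀).input = (A, b) := by simp [trRule, hA]
        have h2 : (trRule b r₀).output = [Symbol.terminal a, Symbol.nonterminal X] := by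
          simp [trRule, hBo, trSym, hX]
        rw [← h1, ← h2]
        exact ContextFreeRule.Rewrites.input_output
      refine step.trans_derives ?_
      have hd' : (trG G).Derives [Symbol.nonterminal X] (List.map Symbol.terminal v) := by
        have : ((B, X.2) : G.NT × Bool) = X := by rw [← hX1]
        exact this ▸ hd
      have := hd'.append_left [Symbol.terminal a]
      simpa using this
    · have htterm : _ = List.map Symbol.terminal (u ++ [a]) := hout.trans (by simp [hBo])
      have : List.map (@Symbol.terminal T G.NT) w
          = List.map Symbol.terminal (u ++ [a]) := derives_terminal_eq (htterm ▸ ht)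
      have hw : w = u ++ [a] :=
        List.map_injective_iff.mpr (fun x y hxy => by cases hxy; rfl) this
      refine ⟨[a], hw, ?_⟩
      refine ContextFreeGrammar.Produces.single ⟨trRule b r₀, mem_trG_rules.mpr ⟨r₀, hr₀, b, rfl⟩, ?_⟩
      simp only [List.map_cons, List.map_nil]
      have h1 : (trRule b r₀).input = (A, b) := by simp [trRule, hA]
      have h2 : (trRule b r₀).output = [Symbol.terminal a] := by simp [trRule, hBo, trSym]
      rw [← h1, ← h2]
      exact ContextFreeRule.Rewrites.input_output

universe u1 u2

/-! ### Mapping a grammar along a function on nonterminals -/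

def mapSym {N : Type u1} {M : Type u2} (f : N → M) : Symbol T N → Symbol T M
  | Symbol.terminal a => Symbol.terminal a
  | Symbol.nonterminal A => Symbol.nonterminal (f A)

def mapRule {N : Type u1} {M : Type u2} (f : N → M) (r : ContextFreeRule T N) :
    ContextFreeRule T M :=
  ⟨f r.input, r.output.map (mapSym f)⟩

@[reducible]
def mapG (G : ContextFreeGrammar T) {M : Type} (f : G.NT → M) :
    ContextFreeGrammar T :=
  ⟨M, f G.initial, G.rules.image (mapRule f)⟩

lemma mapRule_rewrites {N : Type u1} {M : Type u2} (f : N → M) {r : ContextFreeRule T N}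
    {u v : List (Symbol T N)} (h : r.Rewrites u v) :
    (mapRule f r).Rewrites (u.map (mapSym f)) (v.map (mapSym f)) := by
  induction h with
  | head s =>
    simp only [List.map_cons, List.map_append]
    have := ContextFreeRule.Rewrites.head (r := mapRule f r) (List.map (mapSym f) s)
    simpa [mapRule, mapSym] using this
  | cons x _ ih => exact ContextFreeRule.Rewrites.cons _ ih

lemma mapG_derives (G : ContextFreeGrammar T) {M : Type} (f : G.NT → M)
    {s t : List (Symbol T G.NT)} (h : G.Derives s t) :
    (mapG G f).Derives (s.map (mapSym f)) (t.map (mapSym f)) := by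
  induction h with
  | refl => rfl
  | tail _ last ih =>
    refine ih.trans_produces ?_
    obtain ⟨r, hr, hrw⟩ := last
    exact ⟨mapRule f r, Finset.mem_image_of_mem _ hr, mapRule_rewrites f hrw⟩

lemma language_le_mapG (G : ContextFreeGrammar T) {M : Type} (f : G.NT → M) :
    G.language ≤ (mapG G f).language := by
  intro w (hw : w ∈ G.language)
  show w ∈ (mapG G f).language
  rw [ContextFreeGrammar.mem_language_iff] at hw ⊢
  have := mapG_derives G f hw
  simpa [mapSym, List.map_map, Function.comp_def] using this

lemma CFG_mk_eq {N : Type} {i₁ i₂ : N} {R₁ R₂ : Finset (ContextFreeRule T N)}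
    (hi : i₁ = i₂) (hR : R₁ = R₂) :
    (⟨N, i₁, R₁⟩ : ContextFreeGrammar T) = ⟨N, i₂, R₂⟩ := by rw [hi, hR]

lemma mapG_mapG_eq (G : ContextFreeGrammar T) {M : Type} (f : G.NT → M)
    (g : M → G.NT) (h0 : g (f G.initial) = G.initial)
    (h1 : ∀ r ∈ G.rules, mapRule g (mapRule f r) = r) :
    mapG (mapG G f) g = G := by
  classical
  have hR : (G.rules.image (mapRule f)).image (mapRule g) = G.rules := by
    rw [Finset.image_image]
    ext r
    simp only [Finset.mem_image, Function.comp_apply]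
    constructor
    · rintro ⟨r₀, h₀, rfl⟩
      rw [h1 r₀ h₀]; exact h₀
    · intro hr; exact ⟨r, hr, h1 r hr⟩
  exact CFG_mk_eq h0 hR

lemma mapG_language_eq (G : ContextFreeGrammar T) {M : Type} (f : G.NT → M)
    (g : M → G.NT) (h0 : g (f G.initial) = G.initial)
    (h1 : ∀ r ∈ G.rules, mapRule g (mapRule f r) = r) :
    (mapG G f).language = G.language := by
  refine le_antisymm ?_ (language_le_mapG G f)
  have h2 := language_le_mapG (mapG G f) g
  rwa [mapG_mapG_eq G f g h0 h1] at h2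

/-! ### Shrinking nonterminals to a small type -/

/-- Extract the nonterminal from a symbol, if any. -/
def getNT {N : Type u1} : Symbol T N → Option N
  | Symbol.terminal _ => none
  | Symbol.nonterminal A => some A

/-- The finite set of nonterminals actually occurring in a grammar. -/
def usedF (G : ContextFreeGrammar T) : Finset G.NT :=
  haveI := Classical.decEq G.NT
  insert G.initial
    (G.rules.biUnion fun r => insert r.input (r.output.filterMap getNT).toFinset)

lemma initial_mem_usedF (G : ContextFreeGrammar T) : G.initial ∈ usedF G := by
  simp [usedF]

lemma input_mem_usedF {G : ContextFreeGrammar T} {r : ContextFreeRule T G.NT}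
    (hr : r ∈ G.rules) : r.input ∈ usedF G := by
  classical
  simp only [usedF, Finset.mem_insert, Finset.mem_biUnion]
  exact Or.inr ⟨r, hr, by simp⟩

lemma output_mem_usedF {G : ContextFreeGrammar T} {r : ContextFreeRule T G.NT}
    (hr : r ∈ G.rules) {A : G.NT} (hA : Symbol.nonterminal A ∈ r.output) :
    A ∈ usedF G := by
  classical
  simp only [usedF, Finset.mem_insert, Finset.mem_biUnion]
  refine Or.inr ⟨r, hr, Or.inr ?_⟩
  simp only [List.mem_toFinset, List.mem_filterMap]
  exact ⟨Symbol.nonterminal A, hA, rfl⟩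

/-- The shrinking map to `Fin k`. -/
noncomputable def down (G : ContextFreeGrammar T) (A : G.NT) : Fin (usedF G).card :=
  haveI := Classical.dec (A ∈ usedF G)
  (usedF G).equivFin (if h : A ∈ usedF G then ⟨A, h⟩ else ⟨G.initial, initial_mem_usedF G⟩)

noncomputable def up (G : ContextFreeGrammar T) (i : Fin (usedF G).card) : G.NT :=
  (((usedF G).equivFin).symm i : usedF G)

lemma up_down {G : ContextFreeGrammar T} {A : G.NT} (hA : A ∈ usedF G) :
    up G (down G A) = A := by
  simp [up, down, dif_pos hA]

lemma mapRule_up_down {G : ContextFreeGrammar T} {r : ContextFreeRule T G.NT}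
    (hr : r ∈ G.rules) : mapRule (up G) (mapRule (down G) r) = r := by
  have hin : up G (down G r.input) = r.input := up_down (input_mem_usedF hr)
  have hout : (r.output.map (mapSym (down G))).map (mapSym (up G)) = r.output := by
    rw [List.map_map]
    have : ∀ s ∈ r.output, (mapSym (up G) ∘ mapSym (down G)) s = s := by
      intro s hs
      cases s with
      | terminal a => rfl
      | nonterminal A =>
        simp only [Function.comp_apply, mapSym]
        rw [up_down (output_mem_usedF hr hs)]
    rw [List.map_congr_left this]
    simp
  show (⟨_, _⟩ : ContextFreeRule T G.NT) = r
  obtain ⟨i, o⟩ := r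
  simp only [mapRule] at hin hout ⊢
  rw [hin, hout]

lemma mapRule_mapRule {N : Type u1} {M : Type u2} (f : N → M) (g : M → N)
    (hgf : ∀ A, g (f A) = A) (r : ContextFreeRule T N) :
    mapRule g (mapRule f r) = r := by
  obtain ⟨i, o⟩ := r
  show (⟨g (f i), (o.map (mapSym f)).map (mapSym g)⟩ : ContextFreeRule T N) = ⟨i, o⟩
  rw [hgf, List.map_map]
  have : ∀ x ∈ o, (mapSym g ∘ mapSym f) x = x := by
    intro x hx
    cases x with
    | terminal a => rfl
    | nonterminal A => simp [mapSym, hgf]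
  rw [List.map_congr_left this]
  simp

lemma trG_shapes (G : ContextFreeGrammar T)
    (hG : ∀ r ∈ G.rules,
      (∃ (a : T) (B : G.NT), r.output = [Symbol.terminal a, Symbol.nonterminal B]) ∨
      (∃ a : T, r.output = [Symbol.terminal a])) :
    ∀ r ∈ (trG G).rules,
      (∃ (a : T) (B : (trG G).NT), B ≠ r.input ∧
        r.output = [Symbol.terminal a, Symbol.nonterminal B]) ∨
      (∃ a : T, r.output = [Symbol.terminal a]) := by
  intro r hr
  obtain ⟨r₀, hr₀, b, rfl⟩ := mem_trG_rules.mp hr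
  rcases hG r₀ hr₀ with ⟨a, B, hBo⟩ | ⟨a, hBo⟩
  · left
    classical
    refine ⟨a, if B = r₀.input then (r₀.input, !b) else (B, false), ?_, ?_⟩
    · have hin : (trRule b r₀).input = (r₀.input, b) := rfl
      rw [hin]
      split
      · intro hcontr
        have := congrArg Prod.snd hcontr
        simp at this
      · rename_i hne
        intro hcontr
        exact hne (congrArg Prod.fst hcontr)
    · simp [trRule, hBo, trSym]
  · right
    exact ⟨a, by simp [trRule, hBo, trSym]⟩

lemma trG_language (G : ContextFreeGrammar T)
    (hG : ∀ r ∈ G.rules,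
      (∃ (a : T) (B : G.NT), r.output = [Symbol.terminal a, Symbol.nonterminal B]) ∨
      (∃ a : T, r.output = [Symbol.terminal a])) :
    (trG G).language = G.language := by
  ext w
  simp only [ContextFreeGrammar.mem_language_iff]
  constructor
  · intro h
    obtain ⟨v, hv, hd⟩ := bwd G hG h [] G.initial false rfl
    simpa [hv] using hd
  · intro h
    obtain ⟨v, hv, hd⟩ := fwd G hG h [] G.initial rfl false
    simpa [hv] using hd

lemma main (G : ContextFreeGrammar T)
    (hG : ∀ r ∈ G.rules,
      (∃ (a : T) (B : G.NT), r.output = [Symbol.terminal a, Symbol.nonterminal B]) ∨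
      (∃ a : T, r.output = [Symbol.terminal a])) :
    ∃ G' : ContextFreeGrammar T,
      (∀ r ∈ G'.rules,
        (∃ (a : T) (B : G'.NT), B ≠ r.input ∧
          r.output = [Symbol.terminal a, Symbol.nonterminal B]) ∨
        (∃ a : T, r.output = [Symbol.terminal a])) ∧
      G'.language = G.language := by
  classical
  -- Stage 1: shrink nonterminals to `Fin k`.
  set G₁ : ContextFreeGrammar T := mapG G (down G) with hG₁def
  have hL1 : G₁.language = G.language :=
    mapG_language_eq G (down G) (up G) (up_down (initial_mem_usedF G))
      (fun r hr => mapRule_up_down hr)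
  have hG₁ : ∀ r ∈ G₁.rules,
      (∃ (a : T) (B : G₁.NT), r.output = [Symbol.terminal a, Symbol.nonterminal B]) ∨
      (∃ a : T, r.output = [Symbol.terminal a]) := by
    intro r hr
    obtain ⟨r₀, h₀, rfl⟩ := (@Finset.mem_image _ _ (fun a b => @instDecidableEqContextFreeRule T _ (fun a b => Classical.propDecidable (a = b)) (fun a b => Classical.propDecidable (a = b)) a b) _ _ _).mp hr
    rcases hG r₀ h₀ with ⟨a, B, hBo⟩ | ⟨a, hBo⟩
    · exact Or.inl ⟨a, down G B, by simp [mapRule, hBo, mapSym]⟩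
    · exact Or.inr ⟨a, by simp [mapRule, hBo, mapSym]⟩
  -- Stage 2: eliminate self-recursion.
  have hL2 : (trG G₁).language = G₁.language := trG_language G₁ hG₁
  have hS2 := trG_shapes G₁ hG₁
  -- Stage 3: lift to the target universe.
  refine ⟨mapG (trG G₁) ULift.up.{0}, ?_, ?_⟩
  · intro r hr
    obtain ⟨r₀, h₀, rfl⟩ := (@Finset.mem_image _ _ (fun a b => @instDecidableEqContextFreeRule T _ (fun a b => Classical.propDecidable (a = b)) (fun a b => Classical.propDecidable (a = b)) a b) _ _ _).mp hr
    rcases hS2 r₀ h₀ with ⟨a, B, hne, hBo⟩ | ⟨a, hBo⟩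
    · left
      refine ⟨a, ULift.up B, ?_, by simp [mapRule, hBo, mapSym]⟩
      intro hcontr
      exact hne (congrArg ULift.down hcontr)
    · exact Or.inr ⟨a, by simp [mapRule, hBo, mapSym]⟩
  · have hL3 : (mapG (trG G₁) ULift.up.{0}).language = (trG G₁).language :=
      mapG_language_eq (trG G₁) ULift.up ULift.down rfl
        (fun r _ => mapRule_mapRule _ _ (fun _ => rfl) r)
    rw [hL3, hL2, hL1]

end SelfRecElim

end SelfRecElim

/-- Self-recursion elimination for right-linear grammars: if every rule of `G` has the form
`A → a·B` or `A → a`, then there is a grammar `G'` whose rules have the same two forms and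
moreover every rule `A → a·B` of `G'` satisfies `A ≠ B`, generating the same language. -/
theorem exists_nonrecursive_right_linear_grammar {T : Type} (G : ContextFreeGrammar T)
    (hG : ∀ r ∈ G.rules,
      (∃ (a : T) (B : G.NT), r.output = [Symbol.terminal a, Symbol.nonterminal B]) ∨
      (∃ a : T, r.output = [Symbol.terminal a])) :
    ∃ G' : ContextFreeGrammar T,
      (∀ r ∈ G'.rules,
        (∃ (a : T) (B : G'.NT), B ≠ r.input ∧
          r.output = [Symbol.terminal a, Symbol.nonterminal B]) ∨
        (∃ a : T, r.output = [Symbol.terminal a])) ∧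
      G'.language = G.language :=
  SelfRecElim.main G hG
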